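/- Let n ≥ 1, w ∈ (0,∞)^n, p, p* ∈ (0,∞)^n, E ≥ 1, 0 < λ ≤ 1/(2E − 1) and β > 0. Let f = max_i max(p_i/p_i*, p_i*/p_i). Suppose x ∈ (0,∞)^n satisfies, for every i, w_i · f^β · (f·p_i/p_i*)^{−E} ≤ x_i ≤ w_i · f^{−β} · (f·p_i*/p_i)^{E}. Define p'_i = p_i·(1 + λ·min{1, (x_i − w_i)/w_i}) for each i, and let f' = max_i max(p'_i/p_i*, p_i*/p'_i). Then: (1) if f^β ≥ 2 then f' ≤ (1 − λ/2)·f; (2) if f^β ≤ 2 then f' ≤ f^{1 − λβ/(2 ln 2)}. -/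

import Mathlib

open Real


lemma exp_chord {t y : ℝ} (ht0 : 0 ≤ t) (ht1 : t ≤ 1) :
    Real.exp (t * y) ≤ 1 - t + t * Real.exp y := by
  have h := convexOn_exp.2 (Set.mem_univ (0:ℝ)) (Set.mem_univ y)
    (by linarith : (0:ℝ) ≤ 1 - t) ht0 (by ring)
  simpa using h

lemma rpow_nonpos_bernoulli {x q : ℝ} (hx : 1 ≤ x) (hq : q ≤ 0) :
    1 + q * (x - 1) ≤ x ^ q := by
  have hx0 : 0 < x := lt_of_lt_of_le one_pos hx
  rw [Real.rpow_def_of_pos hx0]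
  have h1 : Real.log x ≤ x - 1 := by
    have := Real.log_le_sub_one_of_pos hx0; linarith
  have h2 : q * (x - 1) ≤ q * Real.log x := mul_le_mul_of_nonpos_left h1 hq
  have h3 := Real.add_one_le_exp (Real.log x * q)
  nlinarith [h3]

lemma rpow_chord_lb {K t : ℝ} (hK : 1 ≤ K) (ht0 : 0 ≤ t) (ht1 : t ≤ 1) :
    K ≤ K ^ t * (K - (K-1)*t) := by
  have hK0 : (0:ℝ) < K := by linarith
  have he : Real.exp (-Real.log K) = 1/K := by
    rw [Real.exp_neg, Real.exp_log hK0, one_div]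
  have h := exp_chord (y := -Real.log K) ht0 ht1
  rw [he] at h
  have h2 : Real.exp (-(t * Real.log K)) ≤ 1 - t + t/K := by
    rw [show -(t * Real.log K) = t * -Real.log K by ring]; convert h using 2; ring
  have hKt : K ^ t = Real.exp (t * Real.log K) := by
    rw [Real.rpow_def_of_pos hK0, mul_comm]
  have hprod : Real.exp (t * Real.log K) * Real.exp (-(t * Real.log K)) = 1 := by
    rw [← Real.exp_add]; simp
  have hep := Real.exp_pos (t * Real.log K)
  have hub : K * (1 - t + t/K) ≤ K - (K-1)*t := by
    field_simp; ring_nf; linarith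
  rw [hKt]
  have e1 : rexp (t*log K) * (K * rexp (-(t*log K))) ≤ rexp (t*log K) * (K*(1-t+t/K)) :=
    mul_le_mul_of_nonneg_left (mul_le_mul_of_nonneg_left h2 hK0.le) hep.le
  have e2 : rexp (t*log K) * (K*(1-t+t/K)) ≤ rexp (t*log K) * (K - (K-1)*t) :=
    mul_le_mul_of_nonneg_left hub hep.le
  have e3 : rexp (t*log K) * (K * rexp (-(t*log K))) = K := by
    rw [show rexp (t*log K) * (K * rexp (-(t*log K))) = (rexp (t*log K) * rexp (-(t*log K))) * K by ring, hprod, one_mul]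
  linarith



lemma upper_key {E lam κ c s : ℝ} (hE : 1 ≤ E) (hl0 : 0 < lam)
    (hκ0 : 0 ≤ κ) (hc0 : 0 < c) (hc1 : c < 1 + lam)
    (H3 : lam * κ ≤ c - (1 - lam))
    (H4 : lam * κ * ((1 + lam) / c) ^ E ≤ 2 * lam)
    (hs : 1 ≤ s) :
    1 + lam * min 1 (κ * s ^ E - 1) ≤ c * s := by
  obtain ⟨s₁, hs₁def⟩ : ∃ t, t = (1 + lam) / c := ⟨_, rfl⟩
  rw [← hs₁def] at H4
  have hcs₁ : c * s₁ = 1 + lam := by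
    rw [hs₁def]; field_simp
  have hs₁1 : 1 < s₁ := by
    rw [hs₁def, lt_div_iff₀ hc0]; linarith
  by_cases hcase : s ≤ s₁
  · obtain ⟨a, hadef⟩ : ∃ t, t = (s₁ - s) / (s₁ - 1) := ⟨_, rfl⟩
    obtain ⟨b, hbdef⟩ : ∃ t, t = (s - 1) / (s₁ - 1) := ⟨_, rfl⟩
    have ha0 : 0 ≤ a := by
      rw [hadef]; exact div_nonneg (by linarith) (by linarith)
    have hb0 : 0 ≤ b := by
      rw [hbdef]; exact div_nonneg (by linarith) (by linarith)
    have hne : s₁ - 1 ≠ 0 := by linarith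
    have hab : a + b = 1 := by
      rw [hadef, hbdef, ← add_div]
      rw [div_eq_one_iff_eq hne]; ring
    have hpt : a * 1 + b * s₁ = s := by
      rw [hadef, hbdef]; field_simp; ring
    have hconv := (convexOn_rpow hE).2 (Set.mem_Ici.mpr (by norm_num : (0:ℝ) ≤ 1))
      (Set.mem_Ici.mpr (by positivity : (0:ℝ) ≤ s₁)) ha0 hb0 hab
    simp only [smul_eq_mul, Real.one_rpow, mul_one] at hconv
    rw [show a * 1 + b * s₁ = a + b * s₁ by ring] at hpt
    rw [hpt] at hconv
    -- hconv : s ^ E ≤ a + b * s₁ ^ E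
    have e1 : lam * κ * (s ^ E) ≤ lam * κ * (a + b * s₁ ^ E) :=
      mul_le_mul_of_nonneg_left hconv (by positivity)
    have e3 : lam * κ * a ≤ (c - (1 - lam)) * a := mul_le_mul_of_nonneg_right H3 ha0
    have e4 : lam * κ * s₁ ^ E * b ≤ (2 * lam) * b := mul_le_mul_of_nonneg_right H4 hb0
    have e5 : (c - (1 - lam)) * a + (2 * lam) * b = c * s - (1 - lam) := by
      have h2l : 2 * lam = c * s₁ - (1 - lam) := by linarith
      rw [h2l]
      calc (c - (1 - lam)) * a + (c * s₁ - (1 - lam)) * b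
          = c * (a + b * s₁) - (1 - lam) * (a + b) := by ring
        _ = c * s - (1 - lam) := by rw [hpt, hab, mul_one]
    have key : lam * (κ * s ^ E) ≤ c * s - (1 - lam) := by nlinarith
    have hmin : min 1 (κ * s ^ E - 1) ≤ κ * s ^ E - 1 := min_le_right _ _
    nlinarith [mul_le_mul_of_nonneg_left hmin hl0.le]
  · push_neg at hcase
    have h1 : 1 + lam * min 1 (κ * s ^ E - 1) ≤ 1 + lam := by
      nlinarith [min_le_left (1:ℝ) (κ * s ^ E - 1)]
    have h2 : c * s₁ ≤ c * s := mul_le_mul_of_nonneg_left hcase.le hc0.le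
    linarith

lemma G_mono {E lam κinv a v : ℝ} (hE : 1 ≤ E) (hl0 : 0 ≤ lam)
    (hl1 : lam * (2 * E - 1) ≤ 1) (hκ : 0 < κinv) (ha1 : 1 ≤ a) (hav : a ≤ v)
    (hcap : κinv * a ^ (-E) ≤ 2) :
    (1 - lam) * a + lam * κinv * (a * a ^ (-E)) ≤
      (1 - lam) * v + lam * κinv * (v * v ^ (-E)) := by
  have ha0 : 0 < a := by linarith
  have hv0 : 0 < v := by linarith
  have haE : (0:ℝ) < a ^ (-E) := Real.rpow_pos_of_pos ha0 _
  have hb := rpow_nonpos_bernoulli (x := v / a) (q := 1 - E)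
    ((one_le_div ha0).mpr hav) (by linarith)
  have hva : (v / a) ^ (1 - E) = (v * v ^ (-E)) / (a * a ^ (-E)) := by
    rw [Real.div_rpow hv0.le ha0.le,
      show (1:ℝ) - E = 1 + (-E) by ring, Real.rpow_add hv0, Real.rpow_add ha0,
      Real.rpow_one, Real.rpow_one]
  rw [hva] at hb
  have hprod : 0 < a * a ^ (-E) := by positivity
  have hb2 : (1 + (1 - E) * (v / a - 1)) * (a * a ^ (-E)) ≤ v * v ^ (-E) :=
    (le_div_iff₀ hprod).mp hb
  have hb3 : a * a ^ (-E) + (1 - E) * a ^ (-E) * (v - a) ≤ v * v ^ (-E) := by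
    have : (1 + (1 - E) * (v / a - 1)) * (a * a ^ (-E))
        = a * a ^ (-E) + (1 - E) * a ^ (-E) * (v - a) := by
      field_simp
    linarith [hb2, this.symm.le]
  -- multiply by lam * κinv ≥ 0 and combine
  have hlk : 0 ≤ lam * κinv := by positivity
  have e1 : lam * κinv * (a * a ^ (-E) + (1 - E) * a ^ (-E) * (v - a))
      ≤ lam * κinv * (v * v ^ (-E)) := mul_le_mul_of_nonneg_left hb3 hlk
  -- need (1-lam)*(v-a) ≥ lam*κinv*(E-1)*a^(-E)*(v-a)
  have q1 : 0 ≤ lam * (E - 1) * (v - a) := by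
    have := sub_nonneg.mpr hE
    have := sub_nonneg.mpr hav
    positivity
  have q2 : lam * (E - 1) * (v - a) * (κinv * a ^ (-E)) ≤ lam * (E - 1) * (v - a) * 2 :=
    mul_le_mul_of_nonneg_left hcap q1
  have q3 : lam * (E - 1) * (v - a) * 2 ≤ (1 - lam) * (v - a) := by
    nlinarith [sub_nonneg.mpr hav]
  nlinarith [e1]



lemma lower_key {E lam κ c v : ℝ} (hE : 1 ≤ E) (hl0 : 0 < lam)
    (hl1 : lam * (2 * E - 1) ≤ 1) (hκ0 : 0 < κ) (hc0 : 0 < c)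
    (H2 : 1 ≤ c * (1 + lam))
    (H5 : 1 / 2 ≤ κ → 1 ≤ c * (1 - lam + lam * κ⁻¹))
    (hv : 1 ≤ v) :
    1 ≤ c * v * (1 + lam * min 1 (κ⁻¹ * v ^ (-E) - 1)) := by
  have hv0 : 0 < v := by linarith
  have hκi : 0 < κ⁻¹ := by positivity
  by_cases hL : 2 ≤ κ⁻¹ * v ^ (-E)
  · rw [min_eq_left (by linarith)]
    nlinarith [mul_nonneg (mul_nonneg hc0.le (by linarith : (0:ℝ) ≤ 1 + lam))
      (by linarith : (0:ℝ) ≤ v - 1)]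
  · push_neg at hL
    rw [min_eq_right (by linarith)]
    have hgoal_eq : c * v * (1 + lam * (κ⁻¹ * v ^ (-E) - 1))
        = c * ((1 - lam) * v + lam * κ⁻¹ * (v * v ^ (-E))) := by ring
    rw [hgoal_eq]
    by_cases hκ2 : 1 / 2 ≤ κ
    · have h2 : κ⁻¹ ≤ 2 := by
        have h := inv_mul_cancel₀ hκ0.ne'
        nlinarith
      have hcap : κ⁻¹ * (1:ℝ) ^ (-E) ≤ 2 := by rw [Real.one_rpow]; linarith
      have hmono := G_mono hE hl0.le hl1 hκi le_rfl hv hcap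
      rw [Real.one_rpow, mul_one, mul_one] at hmono
      have h5 := H5 hκ2
      nlinarith [mul_le_mul_of_nonneg_left hmono hc0.le]
    · push_neg at hκ2
      obtain ⟨a, hadef⟩ : ∃ t, t = (2 * κ) ^ (-(1 / E)) := ⟨_, rfl⟩
      have h2κ : (0:ℝ) < 2 * κ := by linarith
      have h2κ1 : 2 * κ < 1 := by linarith
      have hE0 : (0:ℝ) < E := by linarith
      have ha1 : 1 ≤ a := by
        rw [hadef]
        have hne : (0:ℝ) < 1 / E := by positivity
        exact Real.one_le_rpow_of_pos_of_le_one_of_nonpos h2κ h2κ1.le (by linarith)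
      have haE : a ^ (-E) = 2 * κ := by
        rw [hadef, ← Real.rpow_mul h2κ.le]
        rw [show -(1 / E) * -E = 1 by field_simp, Real.rpow_one]
      have hcap : κ⁻¹ * a ^ (-E) ≤ 2 := by
        rw [haE, show κ⁻¹ * (2 * κ) = 2 * (κ⁻¹ * κ) by ring,
          inv_mul_cancel₀ hκ0.ne', mul_one]
      have hav : a ≤ v := by
        by_contra hcon
        push_neg at hcon
        have hlt := Real.rpow_lt_rpow_of_neg hv0 hcon (by linarith : -E < 0)
        rw [haE] at hlt
        have hh := mul_lt_mul_of_pos_left hlt hκi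
        rw [show κ⁻¹ * (2 * κ) = 2 * (κ⁻¹ * κ) by ring,
          inv_mul_cancel₀ hκ0.ne', mul_one] at hh
        linarith
      have hmono := G_mono hE hl0.le hl1 hκi ha1 hav hcap
      have hbase : (1 - lam) * a + lam * κ⁻¹ * (a * a ^ (-E)) = (1 + lam) * a := by
        rw [haE, show lam * κ⁻¹ * (a * (2 * κ)) = 2 * lam * a * (κ⁻¹ * κ) by ring,
          inv_mul_cancel₀ hκ0.ne']
        ring
      rw [hbase] at hmono
      nlinarith [mul_le_mul_of_nonneg_left hmono hc0.le,
        mul_nonneg (mul_nonneg hc0.le (by linarith : (0:ℝ) ≤ 1 + lam))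
          (by linarith : (0:ℝ) ≤ a - 1)]



lemma main_bound (n : ℕ) (hn : 0 < n)
    (w p pstar : Fin n → ℝ)
    (hw : ∀ i, 0 < w i) (hp : ∀ i, 0 < p i) (hpstar : ∀ i, 0 < pstar i)
    (lam E β : ℝ) (hE : 1 ≤ E) (hlam0 : 0 < lam)
    (hl1 : lam * (2 * E - 1) ≤ 1) (hβ : 0 < β)
    (f : ℝ)
    (hf : f = Finset.univ.sup'
      (Finset.univ_nonempty_iff.mpr (Fin.pos_iff_nonempty.mp hn))
      (fun i => max (p i / pstar i) (pstar i / p i)))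
    (hf0 : 0 < f)
    (x : Fin n → ℝ)
    (hxlb : ∀ i, w i * f ^ β * (f * p i / pstar i) ^ (-E) ≤ x i)
    (hxub : ∀ i, x i ≤ w i * f ^ (-β) * (f * pstar i / p i) ^ E)
    (p' : Fin n → ℝ)
    (hp' : ∀ i, p' i = p i * (1 + lam * min 1 ((x i - w i) / w i)))
    (f' : ℝ)
    (hf' : f' = Finset.univ.sup'
      (Finset.univ_nonempty_iff.mpr (Fin.pos_iff_nonempty.mp hn))
      (fun i => max (p' i / pstar i) (pstar i / p' i)))
    (c : ℝ) (hc0 : 0 < c) (hc1 : c < 1 + lam)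
    (H3 : lam * f ^ (-β) ≤ c - (1 - lam))
    (H4 : lam * f ^ (-β) * ((1 + lam) / c) ^ E ≤ 2 * lam)
    (H2 : 1 ≤ c * (1 + lam))
    (H5 : 1 / 2 ≤ f ^ (-β) → 1 ≤ c * (1 - lam + lam * f ^ β)) :
    f' ≤ c * f := by
  have hκ0 : 0 < f ^ (-β) := Real.rpow_pos_of_pos hf0 _
  have hki : (f ^ (-β))⁻¹ = f ^ β := by
    rw [Real.rpow_neg hf0.le, inv_inv]
  have hfge1 : ∀ i, p i / pstar i ≤ f := by
    intro i
    rw [hf]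
    exact le_trans (le_max_left _ _)
      (Finset.le_sup' (fun j => max (p j / pstar j) (pstar j / p j)) (Finset.mem_univ i))
  have hfge2 : ∀ i, pstar i / p i ≤ f := by
    intro i
    rw [hf]
    exact le_trans (le_max_right _ _)
      (Finset.le_sup' (fun j => max (p j / pstar j) (pstar j / p j)) (Finset.mem_univ i))
  rw [hf']
  apply Finset.sup'_le
  intro i _
  apply max_le
  · -- upper: p' i / pstar i ≤ c * f
    have hs1 : 1 ≤ f * pstar i / p i := by
      rw [le_div_iff₀ (hp i), one_mul]
      have := hfge1 i
      rw [div_le_iff₀ (hpstar i)] at this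
      linarith
    have hu := upper_key (s := f * pstar i / p i) hE hlam0 hκ0.le hc0 hc1 H3 H4 hs1
    have hxw : (x i - w i) / w i ≤ f ^ (-β) * (f * pstar i / p i) ^ E - 1 := by
      rw [sub_div, div_self (hw i).ne']
      have hdd : x i / w i ≤ f ^ (-β) * (f * pstar i / p i) ^ E := by
        rw [div_le_iff₀ (hw i)]
        calc x i ≤ w i * f ^ (-β) * (f * pstar i / p i) ^ E := hxub i
          _ = f ^ (-β) * (f * pstar i / p i) ^ E * w i := by ring
      linarith
    have hmin : min 1 ((x i - w i) / w i) ≤ min 1 (f ^ (-β) * (f * pstar i / p i) ^ E - 1) :=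
      min_le_min le_rfl hxw
    have hm : 1 + lam * min 1 ((x i - w i) / w i) ≤ c * (f * pstar i / p i) := by
      have := mul_le_mul_of_nonneg_left hmin hlam0.le
      linarith
    rw [hp' i]
    have hps : (0:ℝ) ≤ p i / pstar i := le_of_lt (div_pos (hp i) (hpstar i))
    calc p i * (1 + lam * min 1 ((x i - w i) / w i)) / pstar i
        = (p i / pstar i) * (1 + lam * min 1 ((x i - w i) / w i)) := by ring
      _ ≤ (p i / pstar i) * (c * (f * pstar i / p i)) := mul_le_mul_of_nonneg_left hm hps
      _ = c * f := by
          field_simp [(hp i).ne', (hpstar i).ne']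
  · -- lower: pstar i / p' i ≤ c * f
    have hv1 : 1 ≤ f * p i / pstar i := by
      rw [le_div_iff₀ (hpstar i), one_mul]
      have := hfge2 i
      rw [div_le_iff₀ (hp i)] at this
      linarith
    have hlow := lower_key (v := f * p i / pstar i) hE hlam0 hl1 hκ0 hc0 H2
      (fun h => by rw [hki]; exact H5 h) hv1
    rw [hki] at hlow
    have hxw : f ^ β * (f * p i / pstar i) ^ (-E) - 1 ≤ (x i - w i) / w i := by
      rw [sub_div, div_self (hw i).ne']
      have hdd : f ^ β * (f * p i / pstar i) ^ (-E) ≤ x i / w i := by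
        rw [le_div_iff₀ (hw i)]
        calc f ^ β * (f * p i / pstar i) ^ (-E) * w i
            = w i * f ^ β * (f * p i / pstar i) ^ (-E) := by ring
          _ ≤ x i := hxlb i
      linarith
    have hmin : min 1 (f ^ β * (f * p i / pstar i) ^ (-E) - 1) ≤ min 1 ((x i - w i) / w i) :=
      min_le_min le_rfl hxw
    have hcv : (0:ℝ) ≤ c * (f * p i / pstar i) := by positivity
    have hm2 : 1 ≤ c * (f * p i / pstar i) * (1 + lam * min 1 ((x i - w i) / w i)) := by
      have h1 := mul_le_mul_of_nonneg_left (mul_le_mul_of_nonneg_left hmin hlam0.le) hcv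
      nlinarith [hlow]
    have hmpos : 0 < 1 + lam * min 1 ((x i - w i) / w i) := by
      by_contra hcon
      push_neg at hcon
      have hcvpos : (0:ℝ) < c * (f * p i / pstar i) := by positivity
      nlinarith
    rw [hp' i]
    rw [div_le_iff₀ (mul_pos (hp i) hmpos)]
    have hveq : f * p i / pstar i * pstar i = f * p i :=
      div_mul_cancel₀ _ (hpstar i).ne'
    calc pstar i = pstar i * 1 := (mul_one _).symm
      _ ≤ pstar i * (c * (f * p i / pstar i) * (1 + lam * min 1 ((x i - w i) / w i))) :=
          mul_le_mul_of_nonneg_left hm2 (hpstar i).le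
      _ = c * (f * p i / pstar i * pstar i) * (1 + lam * min 1 ((x i - w i) / w i)) := by ring
      _ = c * f * (p i * (1 + lam * min 1 ((x i - w i) / w i))) := by rw [hveq]; ring

set_option maxHeartbeats 1000000 in
private lemma stmt12_case1 (n : ℕ) (hn : 0 < n)
    (w p pstar : Fin n → ℝ)
    (hw : ∀ i, 0 < w i) (hp : ∀ i, 0 < p i) (hpstar : ∀ i, 0 < pstar i)
    (lam E β : ℝ) (hE : 1 ≤ E) (hlam0 : 0 < lam)
    (hl1 : lam * (2 * E - 1) ≤ 1) (hβ : 0 < β)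
    (f : ℝ)
    (hf : f = Finset.univ.sup'
      (Finset.univ_nonempty_iff.mpr (Fin.pos_iff_nonempty.mp hn))
      (fun i => max (p i / pstar i) (pstar i / p i)))
    (hf1 : 1 ≤ f)
    (x : Fin n → ℝ)
    (hxlb : ∀ i, w i * f ^ β * (f * p i / pstar i) ^ (-E) ≤ x i)
    (hxub : ∀ i, x i ≤ w i * f ^ (-β) * (f * pstar i / p i) ^ E)
    (p' : Fin n → ℝ)
    (hp' : ∀ i, p' i = p i * (1 + lam * min 1 ((x i - w i) / w i)))
    (f' : ℝ)
    (hf' : f' = Finset.univ.sup'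
      (Finset.univ_nonempty_iff.mpr (Fin.pos_iff_nonempty.mp hn))
      (fun i => max (p' i / pstar i) (pstar i / p' i)))
    (hcase : 2 ≤ f ^ β) : f' ≤ (1 - lam / 2) * f := by
  have hlam_le1 : lam ≤ 1 := by nlinarith
  have hf0 : 0 < f := by linarith
  have hE0 : (0:ℝ) < E := by linarith
  have ht0 : 0 < 1 / E := by positivity
  have ht1 : 1 / E ≤ 1 := by rw [div_le_one hE0]; exact hE
  have htE : 1 / E * E = 1 := by field_simp
  have hlam2t : lam * (2 - 1 / E) ≤ 1 / E := by
    have he1 : (2 * E - 1) * (1 / E) = 2 - 1 / E := by field_simp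
    nlinarith
  have powup : ∀ s K : ℝ, 0 ≤ s → 0 ≤ K → s ≤ K ^ (1 / E) → s ^ E ≤ K := by
    intro s K hs hK h
    have h2 := Real.rpow_le_rpow hs h hE0.le
    rwa [← Real.rpow_mul hK, htE, Real.rpow_one] at h2
  have hκ0 : 0 < f ^ (-β) := Real.rpow_pos_of_pos hf0 _
  have hF0 : 0 < f ^ β := Real.rpow_pos_of_pos hf0 _
  have hκF : f ^ (-β) * f ^ β = 1 := by
    rw [Real.rpow_neg hf0.le]
    exact inv_mul_cancel₀ hF0.ne'
  have hκhalf : f ^ (-β) ≤ 1 / 2 := by nlinarith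
  have hc0 : (0:ℝ) < 1 - lam / 2 := by linarith
  have hc1 : 1 - lam / 2 < 1 + lam := by linarith
  have hbase : (1 + lam) / (1 - lam / 2) ≤ 4 / (4 - 3 * (1 / E)) := by
    rw [div_le_div_iff₀ hc0 (by linarith)]
    nlinarith
  have hchord := rpow_chord_lb (K := 4) (t := 1 / E) (by norm_num) ht0.le ht1
  have h4t : 4 / (4 - 3 * (1 / E)) ≤ (4:ℝ) ^ (1 / E) := by
    rw [div_le_iff₀ (by linarith : (0:ℝ) < 4 - 3 * (1 / E))]
    nlinarith
  have hXle : ((1 + lam) / (1 - lam / 2)) ^ E ≤ 4 :=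
    powup _ 4 (by positivity) (by norm_num) (le_trans hbase h4t)
  have hXge : 0 ≤ ((1 + lam) / (1 - lam / 2)) ^ E := Real.rpow_nonneg (by positivity) _
  have H4 : lam * f ^ (-β) * ((1 + lam) / (1 - lam / 2)) ^ E ≤ 2 * lam := by
    have h1 : f ^ (-β) * ((1 + lam) / (1 - lam / 2)) ^ E ≤ (1 / 2) * 4 :=
      mul_le_mul hκhalf hXle hXge (by norm_num)
    have h2 := mul_le_mul_of_nonneg_left h1 hlam0.le
    calc lam * f ^ (-β) * ((1 + lam) / (1 - lam / 2)) ^ E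
        = lam * (f ^ (-β) * ((1 + lam) / (1 - lam / 2)) ^ E) := by ring
      _ ≤ lam * (1 / 2 * 4) := h2
      _ = 2 * lam := by ring
  have H3 : lam * f ^ (-β) ≤ (1 - lam / 2) - (1 - lam) := by
    have := mul_le_mul_of_nonneg_left hκhalf hlam0.le
    linarith
  have H2 : 1 ≤ (1 - lam / 2) * (1 + lam) := by nlinarith
  have H5 : 1 / 2 ≤ f ^ (-β) → 1 ≤ (1 - lam / 2) * (1 - lam + lam * f ^ β) := by
    intro h
    have hκeq : f ^ (-β) = 1 / 2 := le_antisymm hκhalf h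
    have hFeq : f ^ β = 2 := by nlinarith
    rw [hFeq]
    nlinarith
  exact main_bound n hn w p pstar hw hp hpstar lam E β hE hlam0 hl1 hβ f hf hf0
    x hxlb hxub p' hp' f' hf' (1 - lam / 2) hc0 hc1 H3 H4 H2 H5

set_option maxHeartbeats 1000000 in
private lemma stmt12_case2 (n : ℕ) (hn : 0 < n)
    (w p pstar : Fin n → ℝ)
    (hw : ∀ i, 0 < w i) (hp : ∀ i, 0 < p i) (hpstar : ∀ i, 0 < pstar i)
    (lam E β : ℝ) (hE : 1 ≤ E) (hlam0 : 0 < lam)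
    (hl1 : lam * (2 * E - 1) ≤ 1) (hβ : 0 < β)
    (f : ℝ)
    (hf : f = Finset.univ.sup'
      (Finset.univ_nonempty_iff.mpr (Fin.pos_iff_nonempty.mp hn))
      (fun i => max (p i / pstar i) (pstar i / p i)))
    (hf1 : 1 ≤ f)
    (x : Fin n → ℝ)
    (hxlb : ∀ i, w i * f ^ β * (f * p i / pstar i) ^ (-E) ≤ x i)
    (hxub : ∀ i, x i ≤ w i * f ^ (-β) * (f * pstar i / p i) ^ E)
    (p' : Fin n → ℝ)
    (hp' : ∀ i, p' i = p i * (1 + lam * min 1 ((x i - w i) / w i)))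
    (f' : ℝ)
    (hf' : f' = Finset.univ.sup'
      (Finset.univ_nonempty_iff.mpr (Fin.pos_iff_nonempty.mp hn))
      (fun i => max (p' i / pstar i) (pstar i / p' i)))
    (hcase : f ^ β ≤ 2) : f' ≤ f ^ (1 - lam * β / (2 * Real.log 2)) := by
  have hlam_le1 : lam ≤ 1 := by nlinarith
  have hf0 : 0 < f := by linarith
  have hE0 : (0:ℝ) < E := by linarith
  have ht0 : 0 < 1 / E := by positivity
  have ht1 : 1 / E ≤ 1 := by rw [div_le_one hE0]; exact hE
  have htE : 1 / E * E = 1 := by field_simp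
  have hlam2t : lam * (2 - 1 / E) ≤ 1 / E := by
    have he1 : (2 * E - 1) * (1 / E) = 2 - 1 / E := by field_simp
    nlinarith
  have powup : ∀ s K : ℝ, 0 ≤ s → 0 ≤ K → s ≤ K ^ (1 / E) → s ^ E ≤ K := by
    intro s K hs hK h
    have h2 := Real.rpow_le_rpow hs h hE0.le
    rwa [← Real.rpow_mul hK, htE, Real.rpow_one] at h2
  have hκ0 : 0 < f ^ (-β) := Real.rpow_pos_of_pos hf0 _
  have hF0 : 0 < f ^ β := Real.rpow_pos_of_pos hf0 _
  have hκF : f ^ (-β) * f ^ β = 1 := by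
    rw [Real.rpow_neg hf0.le]
    exact inv_mul_cancel₀ hF0.ne'
  have hl2 : 0 < Real.log 2 := Real.log_pos one_lt_two
  have hl2' : 1 / 2 < Real.log 2 := by
    have h := Real.log_two_gt_d9
    have : (1/2:ℝ) < 0.6931471803 := by norm_num
    linarith
  have hz0 : 0 ≤ β * Real.log f := mul_nonneg hβ.le (Real.log_nonneg hf1)
  have hzl2 : β * Real.log f ≤ Real.log 2 := by
    have h1 : Real.log (f ^ β) ≤ Real.log 2 := Real.log_le_log hF0 hcase
    rwa [Real.log_rpow hf0] at h1
  have hκexp : f ^ (-β) = Real.exp (-(β * Real.log f)) := by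
    rw [Real.rpow_def_of_pos hf0]
    congr 1
    ring
  have hcexp : f ^ (-(lam * β / (2 * Real.log 2)))
      = Real.exp (-(lam * (β * Real.log f) / (2 * Real.log 2))) := by
    rw [Real.rpow_def_of_pos hf0]
    congr 1
    ring
  have hc0 : 0 < f ^ (-(lam * β / (2 * Real.log 2))) := Real.rpow_pos_of_pos hf0 _
  have hδ0 : 0 ≤ lam * β / (2 * Real.log 2) := by positivity
  have hc_le1 : f ^ (-(lam * β / (2 * Real.log 2))) ≤ 1 :=
    Real.rpow_le_one_of_one_le_of_nonpos hf1 (by linarith)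
  have hclb : 1 - lam * (β * Real.log f) / (2 * Real.log 2)
      ≤ f ^ (-(lam * β / (2 * Real.log 2))) := by
    rw [hcexp]
    linarith [Real.add_one_le_exp (-(lam * (β * Real.log f) / (2 * Real.log 2)))]
  have hzb : lam * (β * Real.log f) / (2 * Real.log 2) ≤ lam / 2 := by
    rw [div_le_div_iff₀ (by linarith) (by norm_num)]
    nlinarith
  have hc1 : f ^ (-(lam * β / (2 * Real.log 2))) < 1 + lam := by linarith
  have H2 : 1 ≤ f ^ (-(lam * β / (2 * Real.log 2))) * (1 + lam) := by nlinarith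
  have hκub : f ^ (-β) ≤ 1 - β * Real.log f / (2 * Real.log 2) := by
    have he2 : Real.exp (-Real.log 2) = 2⁻¹ := by
      rw [Real.exp_neg, Real.exp_log two_pos]
    have h := exp_chord (t := β * Real.log f / Real.log 2) (y := -Real.log 2)
      (div_nonneg hz0 hl2.le) ((div_le_one hl2).mpr hzl2)
    rw [he2, show β * Real.log f / Real.log 2 * -Real.log 2 = -(β * Real.log f) by
      field_simp] at h
    rw [hκexp]
    calc Real.exp (-(β * Real.log f))
        ≤ 1 - β * Real.log f / Real.log 2 + β * Real.log f / Real.log 2 * 2⁻¹ := h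
      _ = 1 - β * Real.log f / (2 * Real.log 2) := by
          field_simp
          ring
  have H3 : lam * f ^ (-β) ≤ f ^ (-(lam * β / (2 * Real.log 2))) - (1 - lam) := by
    have hA := mul_le_mul_of_nonneg_left hκub hlam0.le
    have h1 : lam * (1 - β * Real.log f / (2 * Real.log 2))
        = lam - lam * (β * Real.log f) / (2 * Real.log 2) := by ring
    linarith
  have hlamE : lam * E ≤ 1 := by nlinarith
  have h1lam2 : (1 + lam) ^ E ≤ 2 := by
    have hbase2 : 1 + lam ≤ 2 / (2 - 1 / E) := by
      rw [le_div_iff₀ (by linarith)]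
      nlinarith
    have hchord2 := rpow_chord_lb (K := 2) (t := 1 / E) (by norm_num) ht0.le ht1
    have h2t : 2 / (2 - 1 / E) ≤ (2:ℝ) ^ (1 / E) := by
      rw [div_le_iff₀ (by linarith : (0:ℝ) < 2 - 1 / E)]
      nlinarith
    exact powup _ 2 (by linarith) (by norm_num) (le_trans hbase2 h2t)
  have hcE : (f ^ (-(lam * β / (2 * Real.log 2)))) ^ E
      = f ^ (-(lam * β / (2 * Real.log 2)) * E) := by
    rw [← Real.rpow_mul hf0.le]
  have hratio : f ^ (-β) / (f ^ (-(lam * β / (2 * Real.log 2)))) ^ E ≤ 1 := by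
    rw [hcE, ← Real.rpow_sub hf0]
    apply Real.rpow_le_one_of_one_le_of_nonpos hf1
    have hδE : lam * β / (2 * Real.log 2) * E ≤ β := by
      rw [div_mul_eq_mul_div, div_le_iff₀ (by linarith)]
      nlinarith
    linarith
  have hcEpos : 0 < (f ^ (-(lam * β / (2 * Real.log 2)))) ^ E :=
    Real.rpow_pos_of_pos hc0 _
  have H4 : lam * f ^ (-β) * ((1 + lam) / f ^ (-(lam * β / (2 * Real.log 2)))) ^ E
      ≤ 2 * lam := by
    rw [Real.div_rpow (by linarith) hc0.le]
    have h1p : 0 ≤ (1 + lam) ^ E := Real.rpow_nonneg (by linarith) _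
    have hrat0 : 0 ≤ f ^ (-β) / (f ^ (-(lam * β / (2 * Real.log 2)))) ^ E :=
      le_of_lt (div_pos hκ0 hcEpos)
    have hab : (f ^ (-β) / (f ^ (-(lam * β / (2 * Real.log 2)))) ^ E) * (1 + lam) ^ E
        ≤ 1 * 2 := mul_le_mul hratio h1lam2 h1p (by norm_num)
    have h2 := mul_le_mul_of_nonneg_left hab hlam0.le
    calc lam * f ^ (-β) * ((1 + lam) ^ E / (f ^ (-(lam * β / (2 * Real.log 2)))) ^ E)
        = lam * ((f ^ (-β) / (f ^ (-(lam * β / (2 * Real.log 2)))) ^ E) * (1 + lam) ^ E) := by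
          ring
      _ ≤ lam * (1 * 2) := h2
      _ = 2 * lam := by ring
  have H5 : 1 / 2 ≤ f ^ (-β)
      → 1 ≤ f ^ (-(lam * β / (2 * Real.log 2))) * (1 - lam + lam * f ^ β) := by
    intro _
    have hα0 : 0 ≤ lam / (2 * Real.log 2) := by positivity
    have hα1 : lam / (2 * Real.log 2) ≤ 1 := by
      rw [div_le_one (by linarith)]
      linarith
    have hαlam : lam / (2 * Real.log 2) ≤ lam := by
      apply div_le_self hlam0.le
      linarith
    have hch := exp_chord (t := lam / (2 * Real.log 2)) (y := β * Real.log f) hα0 hα1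
    have hez : 1 ≤ Real.exp (β * Real.log f) := by
      linarith [Real.add_one_le_exp (β * Real.log f)]
    have hstep : Real.exp (lam / (2 * Real.log 2) * (β * Real.log f))
        ≤ 1 - lam + lam * Real.exp (β * Real.log f) := by
      nlinarith
    have hFexp : f ^ β = Real.exp (β * Real.log f) := by
      rw [Real.rpow_def_of_pos hf0]
      congr 1
      ring
    have hceq : f ^ (-(lam * β / (2 * Real.log 2)))
        * Real.exp (lam / (2 * Real.log 2) * (β * Real.log f)) = 1 := by
      rw [hcexp, ← Real.exp_add,
        show -(lam * (β * Real.log f) / (2 * Real.log 2))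
          + lam / (2 * Real.log 2) * (β * Real.log f) = 0 by ring,
        Real.exp_zero]
    rw [hFexp]
    calc (1:ℝ) = f ^ (-(lam * β / (2 * Real.log 2)))
          * Real.exp (lam / (2 * Real.log 2) * (β * Real.log f)) := hceq.symm
      _ ≤ f ^ (-(lam * β / (2 * Real.log 2)))
          * (1 - lam + lam * Real.exp (β * Real.log f)) :=
        mul_le_mul_of_nonneg_left hstep hc0.le
  have hmain := main_bound n hn w p pstar hw hp hpstar lam E β hE hlam0 hl1 hβ f hf hf0
    x hxlb hxub p' hp' f' hf' (f ^ (-(lam * β / (2 * Real.log 2)))) hc0 hc1 H3 H4 H2 H5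
  calc f' ≤ f ^ (-(lam * β / (2 * Real.log 2))) * f := hmain
    _ = f ^ (1 - lam * β / (2 * Real.log 2)) := by
        rw [show (1:ℝ) - lam * β / (2 * Real.log 2)
          = -(lam * β / (2 * Real.log 2)) + 1 by ring,
          Real.rpow_add hf0, Real.rpow_one]

theorem stmt12 (n : ℕ) (hn : 0 < n)
    (w p pstar : Fin n → ℝ)
    (hw : ∀ i, 0 < w i) (hp : ∀ i, 0 < p i) (hpstar : ∀ i, 0 < pstar i)
    (lam E β : ℝ) (hE : 1 ≤ E) (hlam0 : 0 < lam)
    (hlam1 : lam ≤ 1 / (2 * E - 1)) (hβ : 0 < β)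
    (f : ℝ)
    (hf : f = Finset.univ.sup'
      (Finset.univ_nonempty_iff.mpr (Fin.pos_iff_nonempty.mp hn))
      (fun i => max (p i / pstar i) (pstar i / p i)))
    (x : Fin n → ℝ) (hx : ∀ i, 0 < x i)
    (hxlb : ∀ i, w i * f ^ β * (f * p i / pstar i) ^ (-E) ≤ x i)
    (hxub : ∀ i, x i ≤ w i * f ^ (-β) * (f * pstar i / p i) ^ E)
    (p' : Fin n → ℝ)
    (hp' : ∀ i, p' i = p i * (1 + lam * min 1 ((x i - w i) / w i)))
    (f' : ℝ)
    (hf' : f' = Finset.univ.sup'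
      (Finset.univ_nonempty_iff.mpr (Fin.pos_iff_nonempty.mp hn))
      (fun i => max (p' i / pstar i) (pstar i / p' i))) :
    (2 ≤ f ^ β → f' ≤ (1 - lam / 2) * f) ∧
    (f ^ β ≤ 2 → f' ≤ f ^ (1 - lam * β / (2 * Real.log 2))) := by
  have h2E0 : (0:ℝ) < 2 * E - 1 := by linarith
  have hl1 : lam * (2 * E - 1) ≤ 1 := by
    have := (le_div_iff₀ h2E0).mp hlam1
    linarith
  have hf1 : 1 ≤ f := by
    obtain ⟨i0⟩ := Fin.pos_iff_nonempty.mp hn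
    have h1 : p i0 / pstar i0 ≤ f := by
      rw [hf]
      exact le_trans (le_max_left _ _)
        (Finset.le_sup' (fun j => max (p j / pstar j) (pstar j / p j)) (Finset.mem_univ i0))
    have h2 : pstar i0 / p i0 ≤ f := by
      rw [hf]
      exact le_trans (le_max_right _ _)
        (Finset.le_sup' (fun j => max (p j / pstar j) (pstar j / p j)) (Finset.mem_univ i0))
    have hd1 : 0 < p i0 / pstar i0 := div_pos (hp i0) (hpstar i0)
    have hprod : (p i0 / pstar i0) * (pstar i0 / p i0) = 1 := by
      rw [div_mul_div_comm, mul_comm (p i0)]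
      exact div_self (mul_pos (hpstar i0) (hp i0)).ne'
    nlinarith
  exact ⟨stmt12_case1 n hn w p pstar hw hp hpstar lam E β hE hlam0 hl1 hβ f hf hf1
      x hxlb hxub p' hp' f' hf',
    stmt12_case2 n hn w p pstar hw hp hpstar lam E β hE hlam0 hl1 hβ f hf hf1
      x hxlb hxub p' hp' f' hf'⟩
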